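/- Suppose ⪯ is a partial quasi-order on a set 𝒮, 𝒮₀,…,𝒮ₙ ⊆ 𝒮 are defined by 𝒮ᵢ = {F(S) : S ∈ 𝒮ᵢ₋₁, F ∈ ℱᵢ, Hᵢ(F(S)) ≤ 0}, and T₀,…,Tₙ are defined by T₀ being a dominating subset of 𝒮₀ and Tᵢ a dominating subset of {F(S) : S ∈ Tᵢ₋₁, F ∈ ℱᵢ, Hᵢ(F(S)) ≤ 0}. Assume (C.1) for all S, S', if S ⪯ S' then F(S) ⪯ F(S') for all F ∈ ℱᵢ, and (C.2) for all S, S', if S ⪯ S' and Hᵢ(S) ≤ 0 then Hᵢ(S') ≤ 0. Then for every i and every S* ∈ 𝒮ᵢ there exists S ∈ Tᵢ with S* ⪯ S. -/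
import Mathlib


/-- Proposition 1: correctness of pruning by dominance in dynamic programming.
Under conditions C.1 and C.2, every state of the full DP state space `𝒮 i`
is dominated by some state of the pruned set `T i`. -/
theorem stmt_3 {α : Type*} (r : α → α → Prop)
    (hrefl : ∀ x, r x x) (htrans : ∀ x y z, r x y → r y z → r x z)
    (n : ℕ) (F : ℕ → Set (α → α)) (H : ℕ → α → ℝ)
    (𝒮 : ℕ → Set α) (T : ℕ → Set α)
    (h𝒮 : ∀ i, 1 ≤ i → i ≤ n →
      𝒮 i = {y | ∃ s ∈ 𝒮 (i - 1), ∃ f ∈ F i, f s = y ∧ H i y ≤ 0})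
    (hT0sub : T 0 ⊆ 𝒮 0)
    (hT0dom : ∀ s ∈ 𝒮 0, ∃ t ∈ T 0, r s t)
    (hTsub : ∀ i, 1 ≤ i → i ≤ n →
      T i ⊆ {y | ∃ s ∈ T (i - 1), ∃ f ∈ F i, f s = y ∧ H i y ≤ 0})
    (hTdom : ∀ i, 1 ≤ i → i ≤ n →
      ∀ y ∈ {y | ∃ s ∈ T (i - 1), ∃ f ∈ F i, f s = y ∧ H i y ≤ 0},
        ∃ t ∈ T i, r y t)
    (C1 : ∀ i, 1 ≤ i → i ≤ n → ∀ f ∈ F i, ∀ s s', r s s' → r (f s) (f s'))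
    (C2 : ∀ i, 1 ≤ i → i ≤ n → ∀ s s', r s s' → H i s ≤ 0 → H i s' ≤ 0) :
    ∀ i ≤ n, ∀ sstar ∈ 𝒮 i, ∃ s ∈ T i, r sstar s := by
  intro i
  induction i with
  | zero => intro _ sstar hs; exact hT0dom sstar hs
  | succ k ih =>
    intro hkn sstar hs
    have h1 : 1 ≤ k + 1 := Nat.le_add_left 1 k
    rw [h𝒮 (k+1) h1 hkn] at hs
    obtain ⟨s, hsmem, f, hf, hfs, hH⟩ := hs
    simp only [Nat.add_sub_cancel] at hsmem
    obtain ⟨t, htmem, hrt⟩ := ih (Nat.le_of_succ_le hkn) s hsmem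
    have hrft : r sstar (f t) := by
      rw [← hfs]; exact C1 (k+1) h1 hkn f hf s t hrt
    have hHft : H (k+1) (f t) ≤ 0 := C2 (k+1) h1 hkn sstar (f t) hrft (hfs ▸ hH)
    obtain ⟨u, humem, hru⟩ := hTdom (k+1) h1 hkn (f t)
      ⟨t, by simpa using htmem, f, hf, rfl, hHft⟩
    exact ⟨u, humem, htrans _ _ _ hrft hru⟩
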